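/- Every finite poset with local dimension at most 2 has dimension at most 2; consequently, local dimension 2 and dimension 2 are equivalent. -/
import Mathlib


/-- `L` is a realizer of the order `le`: a family of linear extensions of `le`
whose intersection is `le`. -/
def IsRealizer {X : Type*} (le : X → X → Prop) {d : ℕ} (L : Fin d → X → X → Prop) : Prop :=
  (∀ i, IsLinearOrder X (L i)) ∧ (∀ (i) (x y : X), le x y → L i x y) ∧
    (∀ x y : X, le x y ↔ ∀ i, L i x y)

/-- The (Dushnik–Miller) dimension of a poset: the least size of a realizer. -/
noncomputable def orderDim (X : Type*) [PartialOrder X] : ℕ :=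
  sInf {d : ℕ | ∃ L : Fin d → X → X → Prop, IsRealizer (· ≤ ·) L}

/-- `L` together with the boolean function `φ` is a boolean realizer of `le`. -/
def IsBooleanRealizer {X : Type*} (le : X → X → Prop) {d : ℕ}
    (L : Fin d → X → X → Prop) (φ : (Fin d → Prop) → Prop) : Prop :=
  (∀ i, IsLinearOrder X (L i)) ∧ ∀ x y : X, le x y ↔ φ (fun i => L i x y)

/-- Boolean dimension of a relation. -/
noncomputable def booleanDimRel {X : Type*} (le : X → X → Prop) : ℕ :=
  sInf {d : ℕ | ∃ (L : Fin d → X → X → Prop) (φ : (Fin d → Prop) → Prop),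
    IsBooleanRealizer le L φ}

/-- Boolean dimension of a poset. -/
noncomputable def booleanDim (X : Type*) [PartialOrder X] : ℕ :=
  booleanDimRel ((· ≤ ·) : X → X → Prop)

/-- A partial linear extension of `le`: a linear order on a subset of `X`
extending the restriction of `le` to that subset. -/
structure PLE {X : Type*} (le : X → X → Prop) where
  dom : Set X
  rel : X → X → Prop
  mem_left : ∀ x y, rel x y → x ∈ dom
  mem_right : ∀ x y, rel x y → y ∈ dom
  refl : ∀ x ∈ dom, rel x x
  antisymm : ∀ x y, rel x y → rel y x → x = y
  trans : ∀ x y z, rel x y → rel y z → rel x z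
  total : ∀ x ∈ dom, ∀ y ∈ dom, rel x y ∨ rel y x
  le_imp : ∀ x ∈ dom, ∀ y ∈ dom, le x y → rel x y

/-- A family of partial linear extensions is a local realizer of `le`:
`x ≤ y` iff no member reverses the pair strictly. -/
def IsLocalRealizer {X : Type*} {le : X → X → Prop} {ι : Type*} (L : ι → PLE le) : Prop :=
  ∀ x y : X, le x y ↔ ∀ i, ¬ ((L i).rel y x ∧ y ≠ x)

/-- Every element of `X` occurs in the domain of at most `d` members of the family. -/
def WidthAtMost {X : Type*} {le : X → X → Prop} {ι : Type*} (L : ι → PLE le) (d : ℕ) : Prop :=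
  ∀ x : X, ({i : ι | x ∈ (L i).dom}).ncard ≤ d

/-- Local dimension of a poset: the least width of a local realizer. -/
noncomputable def localDim (X : Type*) [PartialOrder X] : ℕ :=
  sInf {d : ℕ | ∃ (t : ℕ) (L : Fin t → PLE ((· ≤ ·) : X → X → Prop)),
    IsLocalRealizer L ∧ WidthAtMost L d}

namespace LocalDimAux

variable {X : Type*} [PartialOrder X] {t : ℕ}

lemma not_le_of_rel (p : PLE ((· ≤ ·) : X → X → Prop)) {x y : X}
    (h : p.rel y x) (hne : x ≠ y) : ¬ x ≤ y := fun hxy =>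
  hne (p.antisymm x y (p.le_imp x (p.mem_right y x h) y (p.mem_left y x h) hxy) h)

/-- From a local realizer, incomparable elements get a reversing pair. -/
lemma exists_pair {L : Fin t → PLE ((· ≤ ·) : X → X → Prop)}
    (hLoc : IsLocalRealizer L) {x y : X} (hxy : ¬ x ≤ y) (hyx : ¬ y ≤ x) :
    ∃ a b : Fin t, a ≠ b ∧ (L a).rel y x ∧ (L b).rel x y ∧ x ≠ y := by
  have h1 : ¬ ∀ i, ¬ ((L i).rel y x ∧ y ≠ x) := fun h => hxy ((hLoc x y).2 h)
  have h2 : ¬ ∀ i, ¬ ((L i).rel x y ∧ x ≠ y) := fun h => hyx ((hLoc y x).2 h)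
  push_neg at h1 h2
  obtain ⟨a, ha, hne⟩ := h1
  obtain ⟨b, hb, -⟩ := h2
  refine ⟨a, b, ?_, ha, hb, hne.symm⟩
  rintro rfl
  exact hne ((L a).antisymm y x ha hb)

lemma pair_eq {L : Fin t → PLE ((· ≤ ·) : X → X → Prop)}
    (hW : WidthAtMost L 2) {x : X} {i j k l : Fin t}
    (hi : x ∈ (L i).dom) (hj : x ∈ (L j).dom) (hk : x ∈ (L k).dom) (hl : x ∈ (L l).dom)
    (hij : i ≠ j) (hkl : k ≠ l) : ({i, j} : Set (Fin t)) = {k, l} := by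
  have key : ∀ a b : Fin t, a ≠ b → x ∈ (L a).dom → x ∈ (L b).dom →
      ({a, b} : Set (Fin t)) = {m | x ∈ (L m).dom} := by
    intro a b hab ha hb
    refine Set.eq_of_subset_of_ncard_le ?_ ?_ (Set.toFinite _)
    · rintro m (rfl | rfl) <;> assumption
    · rw [Set.ncard_pair hab]; exact hW x
  rw [key i j hij hi hj, key k l hkl hk hl]


variable {L : Fin t → PLE ((· ≤ ·) : X → X → Prop)} {lt : Fin t → Fin t → Prop}

def relOf (L : Fin t → PLE ((· ≤ ·) : X → X → Prop)) (lt : Fin t → Fin t → Prop)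
    (x y : X) : Prop :=
  x ≤ y ∨ ((∃ i j, lt i j ∧ (L i).rel y x ∧ (L j).rel x y) ∧ x ≠ y)

section
variable (hW : WidthAtMost L 2) (hLoc : IsLocalRealizer L)
  (hAs : ∀ i j, lt i j → ¬ lt j i) (hTot : ∀ i j : Fin t, i ≠ j → lt i j ∨ lt j i)

/-- clause implies incomparability -/
lemma clause_not_le {x y : X} (h : (∃ i j, lt i j ∧ (L i).rel y x ∧ (L j).rel x y) ∧ x ≠ y) :
    ¬ x ≤ y ∧ ¬ y ≤ x := by
  obtain ⟨⟨i, j, _, hiyx, hjxy⟩, hne⟩ := h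
  exact ⟨not_le_of_rel (L i) hiyx hne, not_le_of_rel (L j) hjxy hne.symm⟩

include hAs in
lemma lt_ne {i j : Fin t} (h : lt i j) : i ≠ j := by
  rintro rfl; exact hAs i i h h

include hW hAs in
/-- If both ends of a matched pair: ordered pairs coincide. -/
lemma pair_eq_of_lt {x : X} {i j k l : Fin t}
    (hi : x ∈ (L i).dom) (hj : x ∈ (L j).dom) (hk : x ∈ (L k).dom) (hl : x ∈ (L l).dom)
    (hij : lt i j) (hkl : lt k l) : i = k ∧ j = l := by
  have hpe := pair_eq hW hi hj hk hl (lt_ne hAs hij) (lt_ne hAs hkl)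
  have hik : i = k ∨ i = l := by
    have : i ∈ ({k, l} : Set (Fin t)) := hpe ▸ Set.mem_insert i {j}
    simpa using this
  have hjk : j = k ∨ j = l := by
    have : j ∈ ({k, l} : Set (Fin t)) := hpe ▸ Set.mem_insert_of_mem i rfl
    simpa using this
  rcases hik with rfl | rfl
  · rcases hjk with rfl | rfl
    · exact absurd hij (hAs _ _ hij)
    · exact ⟨rfl, rfl⟩
  · rcases hjk with rfl | rfl
    · exact absurd hkl (hAs _ _ hij)
    · exact absurd hij (hAs _ _ hij)

include hW hLoc hAs in
lemma relOf_trans : ∀ x y z : X, relOf L lt x y → relOf L lt y z → relOf L lt x z := by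
  rintro x y z (hxy | ⟨⟨i, j, hij, hiyx, hjxy⟩, hnexy⟩) (hyz | ⟨⟨k, l, hkl, hkzy, hlyz⟩, hneyz⟩)
  · exact Or.inl (hxy.trans hyz)
  · -- x ≤ y, clause (y,z)
    by_cases hxz : x ≤ z
    · exact Or.inl hxz
    have hzy : ¬ z ≤ y := not_le_of_rel (L l) hlyz hneyz.symm
    have hzx : ¬ z ≤ x := fun h => hzy (h.trans hxy)
    have hnexz : x ≠ z := by rintro rfl; exact hzy hxy
    obtain ⟨a, b, hab, hazx, hbxz, -⟩ := exists_pair hLoc hxz hzx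
    have hzk : z ∈ (L k).dom := (L k).mem_left z y hkzy
    have hzl : z ∈ (L l).dom := (L l).mem_right y z hlyz
    have hza : z ∈ (L a).dom := (L a).mem_left z x hazx
    have hzb : z ∈ (L b).dom := (L b).mem_right x z hbxz
    have hpe := pair_eq hW hza hzb hzk hzl hab (lt_ne hAs hkl)
    have hak : a = k ∨ a = l := by
      have : a ∈ ({k, l} : Set (Fin t)) := hpe ▸ Set.mem_insert a {b}
      simpa using this
    rcases hak with rfl | rfl
    · -- a = k, so b = l
      have hbl : b = l := by
        have : b ∈ ({a, l} : Set (Fin t)) := hpe ▸ Set.mem_insert_of_mem a rfl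
        rcases (by simpa using this : b = a ∨ b = l) with rfl | rfl
        · exact absurd rfl hab
        · rfl
      subst hbl
      exact Or.inr ⟨⟨a, b, hkl, hazx, hbxz⟩, hnexz⟩
    · -- a = l : contradiction
      exfalso
      have hxa : x ∈ (L a).dom := (L a).mem_right z x hazx
      have hya : y ∈ (L a).dom := (L a).mem_left y z hlyz
      have hxy' : (L a).rel x y := (L a).le_imp x hxa y hya hxy
      exact hnexz ((L a).antisymm x z ((L a).trans x y z hxy' hlyz) hazx)
  · -- clause (x,y), y ≤ z
    by_cases hxz : x ≤ z
    · exact Or.inl hxz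
    have hyx : ¬ y ≤ x := not_le_of_rel (L j) hjxy hnexy.symm
    have hzx : ¬ z ≤ x := fun h => hyx (hyz.trans h)
    have hnexz : x ≠ z := by rintro rfl; exact hyx hyz
    obtain ⟨a, b, hab, hazx, hbxz, -⟩ := exists_pair hLoc hxz hzx
    have hxi : x ∈ (L i).dom := (L i).mem_right y x hiyx
    have hxj : x ∈ (L j).dom := (L j).mem_left x y hjxy
    have hxa : x ∈ (L a).dom := (L a).mem_right z x hazx
    have hxb : x ∈ (L b).dom := (L b).mem_left x z hbxz
    have hpe := pair_eq hW hxa hxb hxi hxj hab (lt_ne hAs hij)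
    have hai : a = i ∨ a = j := by
      have : a ∈ ({i, j} : Set (Fin t)) := hpe ▸ Set.mem_insert a {b}
      simpa using this
    rcases hai with rfl | rfl
    · have hbj : b = j := by
        have : b ∈ ({a, j} : Set (Fin t)) := hpe ▸ Set.mem_insert_of_mem a rfl
        rcases (by simpa using this : b = a ∨ b = j) with rfl | rfl
        · exact absurd rfl hab
        · rfl
      subst hbj
      exact Or.inr ⟨⟨a, b, hij, hazx, hbxz⟩, hnexz⟩
    · exfalso
      have hya : y ∈ (L a).dom := (L a).mem_right x y hjxy
      have hza : z ∈ (L a).dom := (L a).mem_left z x hazx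
      have hyz' : (L a).rel y z := (L a).le_imp y hya z hza hyz
      exact hnexz ((L a).antisymm x z ((L a).trans x y z hjxy hyz') hazx)
  · -- clause (x,y), clause (y,z)
    have hyi : y ∈ (L i).dom := (L i).mem_left y x hiyx
    have hyj : y ∈ (L j).dom := (L j).mem_right x y hjxy
    have hyk : y ∈ (L k).dom := (L k).mem_right z y hkzy
    have hyl : y ∈ (L l).dom := (L l).mem_left y z hlyz
    obtain ⟨rfl, rfl⟩ := pair_eq_of_lt hW hAs hyi hyj hyk hyl hij hkl
    have hizx : (L i).rel z x := (L i).trans z y x hkzy hiyx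
    have hjxz : (L j).rel x z := (L j).trans x y z hjxy hlyz
    have hnexz : x ≠ z := by
      rintro rfl
      exact hnexy ((L j).antisymm x y hjxy hlyz)
    exact Or.inr ⟨⟨i, j, hij, hizx, hjxz⟩, hnexz⟩

end

section
variable (hW : WidthAtMost L 2) (hLoc : IsLocalRealizer L)
  (hAs : ∀ i j, lt i j → ¬ lt j i) (hTot : ∀ i j : Fin t, i ≠ j → lt i j ∨ lt j i)

include hW hAs in
lemma relOf_antisymm : ∀ x y : X, relOf L lt x y → relOf L lt y x → x = y := by
  rintro x y (hxy | ⟨⟨i, j, hij, hiyx, hjxy⟩, hnexy⟩) (hyx | hcl)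
  · exact le_antisymm hxy hyx
  · exact absurd hxy (clause_not_le hcl).2
  · exact absurd hyx (not_le_of_rel (L j) hjxy hnexy.symm)
  · exfalso
    obtain ⟨⟨k, l, hkl, hkxy, hlyx⟩, -⟩ := hcl
    have hxi : x ∈ (L i).dom := (L i).mem_right y x hiyx
    have hxj : x ∈ (L j).dom := (L j).mem_left x y hjxy
    have hxk : x ∈ (L k).dom := (L k).mem_left x y hkxy
    have hxl : x ∈ (L l).dom := (L l).mem_right y x hlyx
    obtain ⟨rfl, rfl⟩ := pair_eq_of_lt hW hAs hxi hxj hxk hxl hij hkl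
    exact hnexy ((L i).antisymm x y hkxy hiyx)

include hLoc hTot in
lemma relOf_total : ∀ x y : X, relOf L lt x y ∨ relOf L lt y x := by
  intro x y
  by_cases hxy : x ≤ y
  · exact Or.inl (Or.inl hxy)
  by_cases hyx : y ≤ x
  · exact Or.inr (Or.inl hyx)
  obtain ⟨a, b, hab, hayx, hbxy, hnexy⟩ := exists_pair hLoc hxy hyx
  rcases hTot a b hab with h | h
  · exact Or.inl (Or.inr ⟨⟨a, b, h, hayx, hbxy⟩, hnexy⟩)
  · exact Or.inr (Or.inr ⟨⟨b, a, h, hbxy, hayx⟩, hnexy.symm⟩)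

include hW hLoc hAs hTot in
lemma relOf_isLinearOrder : IsLinearOrder X (relOf L lt) where
  refl x := Or.inl le_rfl
  trans := relOf_trans hW hLoc hAs
  antisymm := relOf_antisymm hW hAs
  total := relOf_total hLoc hTot

end

/-- Intersection of the two opposite relOf's is ≤. -/
lemma relOf_inter (hW : WidthAtMost L 2) {lt' : Fin t → Fin t → Prop}
    (hAs : ∀ i j, lt i j → ¬ lt j i) (hOpp : ∀ i j, lt i j → ¬ lt' i j)
    (hAs' : ∀ i j, lt' i j → ¬ lt' j i)
    {x y : X} (h1 : relOf L lt x y) (h2 : relOf L lt' x y) : x ≤ y := by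
  rcases h1 with h1 | ⟨⟨i, j, hij, hiyx, hjxy⟩, hnexy⟩
  · exact h1
  rcases h2 with h2 | ⟨⟨k, l, hkl, hkyx, hlxy⟩, -⟩
  · exact h2
  exfalso
  have hxi : x ∈ (L i).dom := (L i).mem_right y x hiyx
  have hxj : x ∈ (L j).dom := (L j).mem_left x y hjxy
  have hxk : x ∈ (L k).dom := (L k).mem_right y x hkyx
  have hxl : x ∈ (L l).dom := (L l).mem_left x y hlxy
  have hpe := pair_eq hW hxi hxj hxk hxl (lt_ne hAs hij) (lt_ne hAs' hkl)
  have hik : i = k ∨ i = l := by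
    have : i ∈ ({k, l} : Set (Fin t)) := hpe ▸ Set.mem_insert i {j}
    simpa using this
  rcases hik with rfl | rfl
  · have hjl : j = l := by
      have : j ∈ ({i, l} : Set (Fin t)) := hpe ▸ Set.mem_insert_of_mem i rfl
      rcases (by simpa using this : j = i ∨ j = l) with rfl | rfl
      · exact absurd rfl (lt_ne hAs hij)
      · rfl
    subst hjl
    exact hOpp i j hij hkl
  · exact hnexy ((L i).antisymm x y hlxy hiyx)

/-- Main construction: a width-2 local realizer yields a 2-realizer. -/
lemma main_construction (hLoc : IsLocalRealizer L) (hW : WidthAtMost L 2) :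
    ∃ R : Fin 2 → X → X → Prop,
      (∀ i, IsLinearOrder X (R i)) ∧ (∀ (i) (x y : X), x ≤ y → R i x y) ∧
        (∀ x y : X, x ≤ y ↔ ∀ i, R i x y) := by
  classical
  set lt1 : Fin t → Fin t → Prop := (· < ·) with hlt1
  set lt2 : Fin t → Fin t → Prop := fun a b => b < a with hlt2
  have hAs1 : ∀ i j, lt1 i j → ¬ lt1 j i := fun i j h h' => absurd h' (not_lt_of_gt h)
  have hAs2 : ∀ i j, lt2 i j → ¬ lt2 j i := fun i j h h' => absurd h (not_lt_of_gt h')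
  have hTot1 : ∀ i j : Fin t, i ≠ j → lt1 i j ∨ lt1 j i := fun i j h => h.lt_or_gt
  have hTot2 : ∀ i j : Fin t, i ≠ j → lt2 i j ∨ lt2 j i := fun i j h => h.symm.lt_or_gt
  have hOpp : ∀ i j, lt1 i j → ¬ lt2 i j := fun i j h h' => absurd h' (not_lt_of_gt h)
  refine ⟨![relOf L lt1, relOf L lt2], ?_, ?_, ?_⟩
  · intro i
    fin_cases i
    · exact relOf_isLinearOrder hW hLoc hAs1 hTot1
    · exact relOf_isLinearOrder hW hLoc hAs2 hTot2
  · intro i x y h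
    fin_cases i <;> exact Or.inl h
  · intro x y
    constructor
    · intro h i; fin_cases i <;> exact Or.inl h
    · intro h
      exact relOf_inter hW hAs1 hOpp hAs2 (h 0) (h 1)

/-- A two-element PLE reversing an incomparable/unrelated pair. -/
def pairPLE (a b : X) (hab : ¬ a ≤ b) : PLE ((· ≤ ·) : X → X → Prop) where
  dom := {a, b}
  rel x y := (x = a ∧ y = a) ∨ (x = b ∧ y = b) ∨ (x = b ∧ y = a)
  mem_left x y h := by rcases h with ⟨rfl, -⟩ | ⟨rfl, -⟩ | ⟨rfl, -⟩ <;> simp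
  mem_right x y h := by rcases h with ⟨-, rfl⟩ | ⟨-, rfl⟩ | ⟨-, rfl⟩ <;> simp
  refl x hx := by rcases hx with rfl | rfl <;> simp
  antisymm x y h1 h2 := by
    rcases h1 with ⟨rfl, rfl⟩ | ⟨rfl, rfl⟩ | ⟨rfl, rfl⟩
    · rfl
    · rfl
    · rcases h2 with ⟨-, h'⟩ | ⟨h, -⟩ | ⟨-, h'⟩
      · exact h'
      · exact h.symm
      · exact h'
  trans x y z h1 h2 := by
    rcases h1 with ⟨rfl, rfl⟩ | ⟨rfl, rfl⟩ | ⟨rfl, rfl⟩ <;>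
      rcases h2 with ⟨h, rfl⟩ | ⟨h, rfl⟩ | ⟨h, rfl⟩ <;> simp_all
  total x hx y hy := by
    have hne : a ≠ b := by rintro rfl; exact hab le_rfl
    rcases hx with rfl | rfl <;> rcases hy with rfl | rfl <;> simp_all
  le_imp x hx y hy hxy := by
    rcases hx with rfl | rfl <;> rcases hy with rfl | rfl
    · simp
    · exact absurd hxy hab
    · right; right; exact ⟨rfl, rfl⟩
    · simp

/-- Every finite poset admits some local realizer. -/
lemma localDimSet_nonempty (X : Type*) [PartialOrder X] [Fintype X] :
    {d : ℕ | ∃ (t : ℕ) (L : Fin t → PLE ((· ≤ ·) : X → X → Prop)),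
      IsLocalRealizer L ∧ WidthAtMost L d}.Nonempty := by
  classical
  set s : Finset (X × X) := Finset.univ.filter (fun p => ¬ p.1 ≤ p.2) with hs
  have hmem : ∀ p : X × X, p ∈ s ↔ ¬ p.1 ≤ p.2 := by
    intro p; simp [hs]
  refine ⟨s.card, s.card,
    fun i => pairPLE (s.equivFin.symm i : X × X).1 (s.equivFin.symm i : X × X).2
      ((hmem _).1 (s.equivFin.symm i).2), ?_, ?_⟩
  · intro x y
    constructor
    · rintro h i ⟨hrel, hne⟩
      set p := ((s.equivFin.symm i : s) : X × X) with hp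
      have hple : ¬ p.1 ≤ p.2 := (hmem _).1 (s.equivFin.symm i).2
      rcases hrel with ⟨rfl, rfl⟩ | ⟨rfl, rfl⟩ | ⟨h1, h2⟩
      · exact hne rfl
      · exact hne rfl
      · rw [h1, h2] at h; exact hple h
    · intro h
      by_contra hxy
      have hpmem : (x, y) ∈ s := (hmem _).2 hxy
      refine h (s.equivFin ⟨(x, y), hpmem⟩) ⟨?_, ?_⟩
      · right; right
        rw [Equiv.symm_apply_apply]
        exact ⟨rfl, rfl⟩
      · rintro rfl; exact hxy le_rfl
  · intro x
    calc ({i | x ∈ _}).ncard ≤ (Set.univ : Set (Fin s.card)).ncard :=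
          Set.ncard_le_ncard (Set.subset_univ _) Set.finite_univ
      _ = s.card := by simp [Set.ncard_univ]

/-- A linear order gives a width-1 local realizer. -/
lemma localDimSet_one_of_total (h : ∀ x y : X, x ≤ y ∨ y ≤ x) :
    ∃ (t : ℕ) (L : Fin t → PLE ((· ≤ ·) : X → X → Prop)),
      IsLocalRealizer L ∧ WidthAtMost L 1 := by
  refine ⟨1, fun _ => ⟨Set.univ, (· ≤ ·), fun _ _ _ => trivial, fun _ _ _ => trivial,
    fun x _ => le_rfl, fun x y h1 h2 => le_antisymm h1 h2, fun x y z h1 h2 => h1.trans h2,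
    fun x _ y _ => h x y, fun x _ y _ hxy => hxy⟩, ?_, ?_⟩
  · intro x y
    constructor
    · rintro hxy i ⟨h1, h2⟩
      exact h2 (le_antisymm h1 hxy)
    · intro hh
      by_contra hxy
      rcases h x y with h' | h'
      · exact hxy h'
      · exact hh 0 ⟨h', fun he => hxy (he ▸ h')⟩
  · intro x
    calc ({i | x ∈ _}).ncard ≤ (Set.univ : Set (Fin 1)).ncard :=
          Set.ncard_le_ncard (Set.subset_univ _) Set.finite_univ
      _ = 1 := by simp [Set.ncard_univ]

/-- A linear order gives a 1-realizer. -/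
lemma orderDimSet_one_of_total (h : ∀ x y : X, x ≤ y ∨ y ≤ x) :
    ∃ R : Fin 1 → X → X → Prop,
      (∀ i, IsLinearOrder X (R i)) ∧ (∀ (i) (x y : X), x ≤ y → R i x y) ∧
        (∀ x y : X, x ≤ y ↔ ∀ i, R i x y) := by
  have hlin : IsLinearOrder X ((· ≤ ·) : X → X → Prop) :=
    { refl := le_refl
      trans := fun a b c hab hbc => le_trans hab hbc
      antisymm := fun a b hab hba => le_antisymm hab hba
      total := h }
  exact ⟨fun _ => (· ≤ ·), fun _ => hlin, fun _ _ _ h => h,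
    fun x y => ⟨fun h _ => h, fun h => h 0⟩⟩

/-- width ≤ 1 local realizer forces a total order. -/
lemma total_of_width_le_one {L : Fin t → PLE ((· ≤ ·) : X → X → Prop)}
    (hLoc : IsLocalRealizer L) (hW : WidthAtMost L 1) : ∀ x y : X, x ≤ y ∨ y ≤ x := by
  intro x y
  by_contra hc
  push_neg at hc
  obtain ⟨a, b, hab, hayx, hbxy, -⟩ := exists_pair hLoc hc.1 hc.2
  have hxa : x ∈ (L a).dom := (L a).mem_right y x hayx
  have hxb : x ∈ (L b).dom := (L b).mem_left x y hbxy
  have : ({a, b} : Set (Fin t)).ncard ≤ 1 :=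
    le_trans (Set.ncard_le_ncard (by rintro m (rfl | rfl) <;> assumption) (Set.toFinite _))
      (hW x)
  rw [Set.ncard_pair hab] at this
  omega

/-- A d-realizer (d ≤ 1) forces a total order. -/
lemma total_of_realizer_le_one {d : ℕ} (hd : d ≤ 1) {R : Fin d → X → X → Prop}
    (h1 : ∀ i, IsLinearOrder X (R i)) (h3 : ∀ x y : X, x ≤ y ↔ ∀ i, R i x y) :
    ∀ x y : X, x ≤ y ∨ y ≤ x := by
  intro x y
  interval_cases d
  · exact Or.inl ((h3 x y).2 (fun i => i.elim0))
  · rcases (h1 0).total x y with h | h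
    · exact Or.inl ((h3 x y).2 (fun i => Fin.fin_one_eq_zero i ▸ h))
    · exact Or.inr ((h3 y x).2 (fun i => Fin.fin_one_eq_zero i ▸ h))

/-- A d-realizer yields a width-d local realizer. -/
lemma localRealizer_of_realizer {d : ℕ} {R : Fin d → X → X → Prop}
    (h1 : ∀ i, IsLinearOrder X (R i)) (h2 : ∀ (i) (x y : X), x ≤ y → R i x y)
    (h3 : ∀ x y : X, x ≤ y ↔ ∀ i, R i x y) :
    ∃ L : Fin d → PLE ((· ≤ ·) : X → X → Prop), IsLocalRealizer L ∧ WidthAtMost L d := by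
  refine ⟨fun i => ⟨Set.univ, R i, fun _ _ _ => trivial, fun _ _ _ => trivial,
    fun x _ => (h1 i).refl x, fun x y => (h1 i).antisymm x y,
    fun x y z => (h1 i).trans x y z, fun x _ y _ => (h1 i).total x y,
    fun x _ y _ hxy => h2 i x y hxy⟩, ?_, ?_⟩
  · intro x y
    constructor
    · rintro hxy i ⟨hr, hne⟩
      exact hne ((h1 i).antisymm y x hr (h2 i x y hxy))
    · intro hh
      refine (h3 x y).2 fun i => ?_
      rcases (h1 i).total x y with h | h
      · exact h
      · rcases eq_or_ne y x with rfl | hne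
        · exact h
        · exact absurd ⟨h, hne⟩ (hh i)
  · intro x
    calc ({i | x ∈ _}).ncard ≤ (Set.univ : Set (Fin d)).ncard :=
          Set.ncard_le_ncard (Set.subset_univ _) Set.finite_univ
      _ = d := by simp [Set.ncard_univ]

end LocalDimAux

/-- Every finite poset with local dimension at most 2 has dimension
at most 2; consequently, local dimension 2 and dimension 2 are equivalent. -/
theorem local_dim_two_iff_dim_two (X : Type*) [PartialOrder X] [Fintype X] :
    (localDim X ≤ 2 → orderDim X ≤ 2) ∧ (localDim X = 2 ↔ orderDim X = 2) := by
  classical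
  set Sl := {d : ℕ | ∃ (t : ℕ) (L : Fin t → PLE ((· ≤ ·) : X → X → Prop)),
    IsLocalRealizer L ∧ WidthAtMost L d} with hSl
  set So := {d : ℕ | ∃ L : Fin d → X → X → Prop, IsRealizer (· ≤ ·) L} with hSo
  have hSlne : Sl.Nonempty := LocalDimAux.localDimSet_nonempty X
  have hld : localDim X = sInf Sl := rfl
  have hod : orderDim X = sInf So := rfl
  have key : localDim X ≤ 2 → 2 ∈ So := by
    intro h
    have hmem : localDim X ∈ Sl := hld ▸ Nat.sInf_mem hSlne
    obtain ⟨t, L, hLoc, hW⟩ := hmem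
    have hW2 : WidthAtMost L 2 := fun x => (hW x).trans h
    obtain ⟨R, h1, h2, h3⟩ := LocalDimAux.main_construction hLoc hW2
    exact ⟨R, h1, h2, h3⟩
  have part1 : localDim X ≤ 2 → orderDim X ≤ 2 := fun h => hod ▸ Nat.sInf_le (key h)
  refine ⟨part1, ?_, ?_⟩
  · intro h2
    have h2So : 2 ∈ So := key h2.le
    have hSone : So.Nonempty := ⟨2, h2So⟩
    refine le_antisymm (part1 h2.le) ?_
    by_contra hlt
    push_neg at hlt
    have hodmem : orderDim X ∈ So := hod ▸ Nat.sInf_mem hSone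
    obtain ⟨R, hR1, hR2, hR3⟩ := hodmem
    have htot : ∀ x y : X, x ≤ y ∨ y ≤ x :=
      LocalDimAux.total_of_realizer_le_one (by omega) hR1 hR3
    have h1Sl : (1 : ℕ) ∈ Sl := by
      obtain ⟨t, L, hLoc, hW⟩ := LocalDimAux.localDimSet_one_of_total htot
      exact ⟨t, L, hLoc, hW⟩
    have : localDim X ≤ 1 := hld ▸ Nat.sInf_le h1Sl
    omega
  · intro h2
    have hSone : So.Nonempty := by
      rw [Set.nonempty_iff_ne_empty]
      intro he
      rw [hod] at h2
      rw [he] at h2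
      simp [Nat.sInf_empty] at h2
    have h2So : 2 ∈ So := by
      have := Nat.sInf_mem hSone
      rw [← hod, h2] at this
      exact this
    obtain ⟨R, hR1, hR2, hR3⟩ := h2So
    obtain ⟨L, hLoc, hW⟩ := LocalDimAux.localRealizer_of_realizer hR1 hR2 hR3
    have hle2 : localDim X ≤ 2 := hld ▸ Nat.sInf_le ⟨2, L, hLoc, hW⟩
    refine le_antisymm hle2 ?_
    by_contra hlt
    push_neg at hlt
    have hmem : localDim X ∈ Sl := hld ▸ Nat.sInf_mem hSlne
    obtain ⟨t, L', hLoc', hW'⟩ := hmem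
    have hW1 : WidthAtMost L' 1 := fun x => (hW' x).trans (by omega)
    have htot := LocalDimAux.total_of_width_le_one hLoc' hW1
    obtain ⟨R', h1, h2', h3⟩ := LocalDimAux.orderDimSet_one_of_total htot
    have : orderDim X ≤ 1 := hod ▸ Nat.sInf_le ⟨R', h1, h2', h3⟩
    omega
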